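/- arXiv:1610.07398 — 5 statements merged into one kernel-verified Lean document; each statement's English description precedes it below -/
import Mathlib

section
/- Let (X, μ) be a measure space, let σ ⊆ X be a measurable set, and let φ₁, …, φ_n : X → ℝ be square-integrable on σ. Let M ∈ ℝ^{n×n} be the Gram matrix M_{jk} = ∫_σ φ_k φ_j dμ and assume det M ≠ 0. If ξ ∈ ℝ^n solves M ξ = e₁ (the first standard basis vector) and ψ = Σ_{k=1}^n ξ_k φ_k, then ψ satisfies ∫_σ ψ φ_j dμ = δ_{1j} for all j, and ∫_σ ψ² dμ = det(M^{11}) / det(M), where M^{11} denotes the (n−1)×(n−1) submatrix of M obtained by deleting the first row and the first column. -/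
set_option maxHeartbeats 1000000

open MeasureTheory

/-- If `M` is the Gram matrix of square-integrable functions `φ_k` on `σ` with
`det M ≠ 0`, `ξ` solves `M ξ = e₁`, and `ψ = ∑ ξ_k φ_k`, then `ψ` satisfies the
duality conditions `∫_σ ψ φ_j dμ = δ_{1j}` and `∫_σ ψ² dμ = det(M¹¹)/det M`,
where `M¹¹` deletes the first row and column of `M`. -/
theorem dual_basis_sq_integral_eq_det_ratio
    {X : Type*} [MeasurableSpace X] (μ : Measure X)
    (σ : Set X) (hσ : MeasurableSet σ)
    (n : ℕ) (φ : Fin (n + 1) → X → ℝ)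
    (hφ : ∀ k, MemLp (φ k) 2 (μ.restrict σ))
    (M : Matrix (Fin (n + 1)) (Fin (n + 1)) ℝ)
    (hM : ∀ j k, M j k = ∫ x in σ, φ k x * φ j x ∂μ)
    (hdet : M.det ≠ 0)
    (ξ : Fin (n + 1) → ℝ)
    (hξ : M.mulVec ξ = Pi.single 0 1)
    (ψ : X → ℝ)
    (hψ : ψ = fun x => ∑ k, ξ k * φ k x) :
    (∀ j, ∫ x in σ, ψ x * φ j x ∂μ = if j = 0 then 1 else 0) ∧
      ∫ x in σ, (ψ x) ^ 2 ∂μ =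
        (M.submatrix Fin.succ Fin.succ).det / M.det := by
  have hψx : ∀ x, ψ x = ∑ k, ξ k * φ k x := fun x => by rw [hψ]
  have hmul : ∀ f g : X → ℝ, MemLp f 2 (μ.restrict σ) → MemLp g 2 (μ.restrict σ) →
      Integrable (fun x => f x * g x) (μ.restrict σ) := by
    intro f g hf hg
    have h := hg.smul (φ := f) hf
      (p := 2) (q := 2) (r := 1)
    rw [memLp_one_iff_integrable] at h
    exact h
  have hψ2 : MemLp ψ 2 (μ.restrict σ) := by
    rw [hψ]
    exact memLp_finset_sum _ (fun k _ => (hφ k).const_mul (ξ k))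
  have hint : ∀ k j : Fin (n + 1),
      Integrable (fun x => ξ k * (φ k x * φ j x)) (μ.restrict σ) :=
    fun k j => ((hmul _ _ (hφ k) (hφ j))).const_mul _
  have h1 : ∀ j, ∫ x in σ, ψ x * φ j x ∂μ = if j = 0 then 1 else 0 := by
    intro j
    have : ∫ x in σ, ψ x * φ j x ∂μ = ∑ k, ξ k * ∫ x in σ, φ k x * φ j x ∂μ := by
      rw [hψ]
      simp_rw [Finset.sum_mul, mul_assoc]
      rw [integral_finset_sum _ (fun k _ => hint k j)]
      simp_rw [integral_const_mul]
    rw [this]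
    have := congrFun hξ j
    rw [Matrix.mulVec, dotProduct] at this
    simp_rw [hM, mul_comm] at this ⊢
    rw [this, Pi.single_apply]
  constructor
  · exact h1
  · have hψint : ∀ k, Integrable (fun x => ξ k * (ψ x * φ k x)) (μ.restrict σ) :=
      fun k => ((hmul _ _ hψ2 (hφ k))).const_mul _
    have h2 : ∫ x in σ, (ψ x) ^ 2 ∂μ = ξ 0 := by
      have hpt : ∀ x, (ψ x) ^ 2 = ∑ k, ξ k * (ψ x * φ k x) := by
        intro x
        rw [sq]
        nth_rewrite 2 [hψx x]
        rw [Finset.mul_sum]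
        exact Finset.sum_congr rfl fun k _ => by ring
      simp_rw [hpt]
      rw [integral_finset_sum _ (fun k _ => hψint k)]
      simp_rw [integral_const_mul, h1]
      simp
    rw [h2]
    -- Cramer's rule: ξ 0 = adjugate M 0 0 / det M
    have hMinv : M⁻¹.mulVec (Pi.single 0 1) = ξ := by
      rw [← hξ, Matrix.mulVec_mulVec,
        Matrix.nonsing_inv_mul M (isUnit_iff_ne_zero.mpr hdet), Matrix.one_mulVec]
    have hx0 : ξ 0 = M⁻¹ 0 0 := by
      rw [← hMinv]
      simp [Matrix.mulVec_single]
    rw [hx0, Matrix.inv_def]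
    simp [Matrix.adjugate_fin_succ_eq_det_submatrix, Fin.succAbove_zero,
      Ring.inverse_eq_inv', div_eq_inv_mul, mul_comm]
end

section
/- Let d ≥ 1, H > 0, z ∈ ℝ^d, and let B ∈ ℝ^{d×d} be an invertible matrix with det(B) = H^d. Define the affine map F(x̂) = B x̂ + z. Let σ ⊆ ℝ^d be a measurable set, let φ₁, …, φ_n : ℝ^d → ℝ be functions square-integrable on σ (with respect to Lebesgue measure), set φ̂_j = φ_j ∘ F and σ̂ = F^{-1}(σ), and let M̂ ∈ ℝ^{n×n} be the Gram matrix M̂_{jk} = ∫_{σ̂} φ̂_k φ̂_j dx̂, assumed invertible. If ψ is a function in the span of φ₁, …, φ_n satisfying ∫_σ ψ φ_j dx = δ_{1j} for all j = 1, …, n, then ‖ψ‖²_{L²(σ)} = H^{-d} κ², where κ² = det(M̂^{11}) / det(M̂) and M̂^{11} is the submatrix of M̂ obtained by deleting the first row and first column. -/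
open MeasureTheory

private lemma integrable_mul_of_memL2 {α : Type*} [MeasurableSpace α] {μ : Measure α}
    {f g : α → ℝ} (hf : MemLp f 2 μ) (hg : MemLp g 2 μ) :
    Integrable (fun x => f x * g x) μ := by
  have h2 : (1 : ENNReal) / 1 = 1 / 2 + 1 / 2 := by
    rw [ENNReal.div_add_div_same, one_div_one]
    norm_num
    rw [ENNReal.div_self (by norm_num) (by norm_num)]
  have h : MemLp (f • g) 1 μ := hg.smul hf
  have := memLp_one_iff_integrable.mp h
  exact this

/-- Dual basis L²-norm: under an affine rescaling `F(x̂) = B x̂ + z` with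
`det B = H^d`, the dual basis function `ψ` to `φ₁` on `σ` satisfies
`‖ψ‖²_{L²(σ)} = H^{-d} κ²` with `κ² = det(M̂¹¹)/det(M̂)`, where `M̂` is the
Gram matrix of the pulled-back functions `φ̂_j = φ_j ∘ F` on `σ̂ = F⁻¹(σ)`. -/
theorem dual_basis_L2_norm_scaling
    (d : ℕ) (hd : 1 ≤ d) (H : ℝ) (hH : 0 < H)
    (z : Fin d → ℝ) (B : Matrix (Fin d) (Fin d) ℝ)
    (hB : B.det = H ^ d)
    (F : (Fin d → ℝ) → (Fin d → ℝ)) (hF : F = fun x => B.mulVec x + z)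
    (σ : Set (Fin d → ℝ)) (hσ : MeasurableSet σ)
    (n : ℕ) (φ : Fin (n + 1) → (Fin d → ℝ) → ℝ)
    (hφ : ∀ k, MemLp (φ k) 2 (volume.restrict σ))
    (φhat : Fin (n + 1) → (Fin d → ℝ) → ℝ) (hφhat : ∀ k, φhat k = φ k ∘ F)
    (σhat : Set (Fin d → ℝ)) (hσhat : σhat = F ⁻¹' σ)
    (Mhat : Matrix (Fin (n + 1)) (Fin (n + 1)) ℝ)
    (hMhat : ∀ j k, Mhat j k = ∫ x in σhat, φhat k x * φhat j x)
    (hMdet : Mhat.det ≠ 0)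
    (ψ : (Fin d → ℝ) → ℝ)
    (hψ : ψ ∈ Submodule.span ℝ (Set.range φ))
    (hdual : ∀ j, ∫ x in σ, ψ x * φ j x = if j = 0 then 1 else 0) :
    ∫ x in σ, (ψ x) ^ 2 =
      H ^ (-(d : ℤ)) * ((Mhat.submatrix Fin.succ Fin.succ).det / Mhat.det) := by
  classical
  have hHd : (0:ℝ) < H ^ d := pow_pos hH d
  have hdetB : B.det ≠ 0 := by rw [hB]; exact ne_of_gt hHd
  -- coefficients of ψ
  rw [Submodule.mem_span_range_iff_exists_fun] at hψ
  obtain ⟨c, hc⟩ := hψ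
  have hψx : ∀ x, ψ x = ∑ i, c i * φ i x := by
    intro x
    rw [← hc]
    simp [Finset.sum_apply]
  -- ψ is in L², hence products are integrable
  have hψL2 : MemLp ψ 2 (volume.restrict σ) := by
    rw [← hc]
    have := memLp_finset_sum' (μ := volume.restrict σ) (p := 2)
      (f := fun i => c i • φ i) Finset.univ (fun i _ => (hφ i).const_smul (c i))
    simpa using this
  have hintψ : ∀ j, Integrable (fun x => ψ x * φ j x) (volume.restrict σ) :=
    fun j => integrable_mul_of_memL2 hψL2 (hφ j)
  have hintφφ : ∀ j k : Fin (n+1),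
      Integrable (fun x => φ j x * φ k x) (volume.restrict σ) :=
    fun j k => integrable_mul_of_memL2 (hφ j) (hφ k)
  -- Step 1: ∫ ψ² = c 0
  have key1 : ∫ x in σ, (ψ x) ^ 2 = c 0 := by
    have heq : ∀ x, (ψ x) ^ 2 = ∑ j, c j * (ψ x * φ j x) := by
      intro x
      have h1 : ∑ j, c j * (ψ x * φ j x) = ψ x * ∑ j, c j * φ j x := by
        rw [Finset.mul_sum]
        exact Finset.sum_congr rfl fun j _ => by ring
      rw [h1, ← hψx x, sq]
    calc ∫ x in σ, (ψ x) ^ 2 = ∫ x in σ, ∑ j, c j * (ψ x * φ j x) := by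
          exact integral_congr_ae (Filter.Eventually.of_forall fun x => heq x)
      _ = ∑ j, ∫ x in σ, c j * (ψ x * φ j x) :=
          integral_finset_sum _ (fun j _ => (hintψ j).const_mul (c j))
      _ = ∑ j, c j * ∫ x in σ, ψ x * φ j x := by
          exact Finset.sum_congr rfl fun j _ => integral_const_mul _ _
      _ = ∑ j, c j * (if j = 0 then 1 else 0) := by
          exact Finset.sum_congr rfl fun j _ => by rw [hdual j]
      _ = c 0 := by simp
  -- measurability of F
  have hmv : Continuous fun x : Fin d → ℝ => B.mulVec x := by
    have := LinearMap.continuous_on_pi (Matrix.mulVecLin B)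
    exact this
  have hFc : Continuous F := by
    rw [hF]; exact hmv.add continuous_const
  have hFmeas : Measurable F := hFc.measurable
  -- the pushforward measure
  have hmap : Measure.map F volume = ENNReal.ofReal ((H ^ d)⁻¹) • volume := by
    have hFeq : F = (fun y => y + z) ∘ (Matrix.toLin' B) := by
      funext x
      simp [hF, Matrix.toLin'_apply]
    rw [hFeq, ← Measure.map_map (measurable_add_const z)
      (Continuous.measurable (LinearMap.continuous_on_pi _)),
      Real.map_matrix_volume_pi_eq_smul_volume_pi hdetB, Measure.map_smul,
      map_add_right_eq_self volume z, hB, abs_of_pos (inv_pos.mpr hHd)]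
  have hmapr : Measure.map F (volume.restrict σhat)
      = ENNReal.ofReal ((H ^ d)⁻¹) • volume.restrict σ := by
    rw [hσhat, ← Measure.restrict_map_of_aemeasurable hFmeas.aemeasurable hσ, hmap,
      Measure.restrict_smul]
  -- Step 2: Gram matrix relation: Mhat j k = (H^d)⁻¹ * ∫_σ φ k * φ j
  have hgram : ∀ j k, Mhat j k = (H ^ d)⁻¹ * ∫ x in σ, φ k x * φ j x := by
    intro j k
    have hsm : AEStronglyMeasurable (fun x => φ k x * φ j x)
        (Measure.map F (volume.restrict σhat)) := by
      rw [hmapr]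
      exact (hintφφ k j).aestronglyMeasurable.mono_ac Measure.smul_absolutelyContinuous
    have := integral_map (f := fun x => φ k x * φ j x)
      (hFmeas.aemeasurable : AEMeasurable F (volume.restrict σhat)) hsm
    rw [hMhat j k, hφhat, hφhat]
    calc (∫ x in σhat, (φ k ∘ F) x * (φ j ∘ F) x)
        = ∫ y, φ k y * φ j y ∂(Measure.map F (volume.restrict σhat)) := by
          rw [this]; rfl
      _ = (H ^ d)⁻¹ * ∫ x in σ, φ k x * φ j x := by
          rw [hmapr, integral_smul_measure, ENNReal.toReal_ofReal (inv_nonneg.mpr hHd.le),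
            smul_eq_mul]
  -- Step 3: the linear system Mhat.mulVec c = (H^d)⁻¹ • e₀
  have hsys : Mhat.mulVec c = fun j => (H ^ d)⁻¹ * (if j = 0 then 1 else 0) := by
    funext j
    have : (Mhat.mulVec c) j = (H ^ d)⁻¹ * ∫ x in σ, ψ x * φ j x := by
      calc (Mhat.mulVec c) j = ∑ k, Mhat j k * c k := by
            simp [Matrix.mulVec, dotProduct]
        _ = ∑ k, (H ^ d)⁻¹ * (c k * ∫ x in σ, φ k x * φ j x) := by
            exact Finset.sum_congr rfl fun k _ => by rw [hgram j k]; ring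
        _ = (H ^ d)⁻¹ * ∑ k, c k * ∫ x in σ, φ k x * φ j x := by
            rw [Finset.mul_sum]
        _ = (H ^ d)⁻¹ * ∑ k, ∫ x in σ, c k * (φ k x * φ j x) := by
            congr 1
            exact Finset.sum_congr rfl fun k _ => (integral_const_mul _ _).symm
        _ = (H ^ d)⁻¹ * ∫ x in σ, ∑ k, c k * (φ k x * φ j x) := by
            congr 1
            exact (integral_finset_sum _ (fun k _ => (hintφφ k j).const_mul (c k))).symm
        _ = (H ^ d)⁻¹ * ∫ x in σ, ψ x * φ j x := by
            congr 1
            apply integral_congr_ae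
            apply Filter.Eventually.of_forall
            intro x
            show ∑ k, c k * (φ k x * φ j x) = ψ x * φ j x
            rw [hψx x, Finset.sum_mul]
            exact Finset.sum_congr rfl fun k _ => by ring
    rw [this, hdual j]
  -- Step 4: solve for c 0
  have hunit : IsUnit Mhat.det := isUnit_iff_ne_zero.mpr hMdet
  have hcinv : c = Mhat⁻¹.mulVec (Mhat.mulVec c) := by
    rw [Matrix.mulVec_mulVec, Matrix.nonsing_inv_mul Mhat hunit, Matrix.one_mulVec]
  have hc0 : c 0 = (H ^ d)⁻¹ * Mhat⁻¹ 0 0 := by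
    conv_lhs => rw [hcinv]
    rw [hsys]
    simp only [Matrix.mulVec, dotProduct]
    rw [Finset.sum_eq_single (0 : Fin (n+1))]
    · simp [mul_comm]
    · intro k _ hk
      simp [hk]
    · simp
  -- Step 5: compute Mhat⁻¹ 0 0
  have hadj : Mhat.adjugate 0 0 = (Mhat.submatrix Fin.succ Fin.succ).det := by
    rw [Matrix.adjugate_fin_succ_eq_det_submatrix]
    simp [Fin.succAbove_zero]
  have hinv00 : Mhat⁻¹ 0 0 = (Mhat.submatrix Fin.succ Fin.succ).det / Mhat.det := by
    rw [Matrix.inv_def, Matrix.smul_apply, hadj, Ring.inverse_eq_inv', smul_eq_mul]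
    ring
  rw [key1, hc0, hinv00]
  congr 1
  rw [zpow_neg, zpow_natCast]
end

section
/- Let (X, μ) be a measure space, let σ ⊆ σ̃ ⊆ X be measurable sets, and let φ₁, …, φ_n : X → ℝ be square-integrable on σ̃. Suppose ψ = Σ_{k=1}^n ξ_k φ_k satisfies ∫_σ ψ φ_j dμ = δ_{1j} for all j = 1, …, n, and ψ̃ = Σ_{k=1}^n ξ̃_k φ_k satisfies ∫_{σ̃} ψ̃ φ_j dμ = δ_{1j} for all j = 1, …, n. Then ‖ψ̃‖_{L²(σ̃)} ≤ ‖ψ‖_{L²(σ)}, i.e., (∫_{σ̃} ψ̃² dμ)^{1/2} ≤ (∫_σ ψ² dμ)^{1/2}. -/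
open MeasureTheory
open scoped ENNReal

private lemma memLp_mul_integrable {α : Type*} [MeasurableSpace α] {ν : Measure α}
    {f g : α → ℝ} (hf : MemLp f 2 ν) (hg : MemLp g 2 ν) :
    Integrable (fun x => f x * g x) ν := by
  rw [← memLp_one_iff_integrable]
  have h : (1 : ℝ≥0∞) / 1 = 1 / 2 + 1 / 2 := by
    rw [ENNReal.div_add_div_same, one_add_one_eq_two,
      ENNReal.div_self two_ne_zero ENNReal.ofNat_ne_top, div_one]
  simpa [smul_eq_mul, Pi.mul_def] using MemLp.smul (p := 2) (q := 2) (r := 1) hg hf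

private lemma cauchy_schwarz_integral {α : Type*} [MeasurableSpace α] (ν : Measure α)
    {f g : α → ℝ} (hf : MemLp f 2 ν) (hg : MemLp g 2 ν) :
    ∫ x, f x * g x ∂ν ≤ Real.sqrt (∫ x, f x ^ 2 ∂ν) * Real.sqrt (∫ x, g x ^ 2 ∂ν) := by
  set F : Lp ℝ 2 ν := hf.toLp f
  set G : Lp ℝ 2 ν := hg.toLp g
  have hFf := hf.coeFn_toLp
  have hGg := hg.coeFn_toLp
  have hinner : ∀ (u v : α → ℝ) (hu : MemLp u 2 ν) (hv : MemLp v 2 ν),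
      (inner ℝ (hu.toLp u) (hv.toLp v) : ℝ) = ∫ x, u x * v x ∂ν := by
    intro u v hu hv
    rw [L2.inner_def]
    refine integral_congr_ae ?_
    filter_upwards [hu.coeFn_toLp, hv.coeFn_toLp] with x h1 h2
    simp [h1, h2, RCLike.inner_apply, mul_comm]
  have hnorm : ∀ (u : α → ℝ) (hu : MemLp u 2 ν),
      ‖hu.toLp u‖ = Real.sqrt (∫ x, u x ^ 2 ∂ν) := by
    intro u hu
    have h1 : (inner ℝ (hu.toLp u) (hu.toLp u) : ℝ) = ∫ x, u x ^ 2 ∂ν := by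
      rw [hinner u u hu hu]
      simp [sq]
    have h2 : (inner ℝ (hu.toLp u) (hu.toLp u) : ℝ) = ‖hu.toLp u‖ * ‖hu.toLp u‖ :=
      real_inner_self_eq_norm_mul_norm _
    rw [← h1, h2, Real.sqrt_mul_self (norm_nonneg _)]
  calc ∫ x, f x * g x ∂ν = (inner ℝ F G : ℝ) := (hinner f g hf hg).symm
    _ ≤ ‖F‖ * ‖G‖ := real_inner_le_norm F G
    _ = Real.sqrt (∫ x, f x ^ 2 ∂ν) * Real.sqrt (∫ x, g x ^ 2 ∂ν) := by
        rw [hnorm f hf, hnorm g hg]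

/-- Extending the integration domain never increases the dual basis L²-norm:
if `ψ` is dual to `φ₁` on `σ` and `ψ̃` is dual to `φ₁` on `σ̃ ⊇ σ`, then
`‖ψ̃‖_{L²(σ̃)} ≤ ‖ψ‖_{L²(σ)}`. -/
theorem extend_integration_domain_le
    {X : Type*} [MeasurableSpace X] (μ : Measure X)
    (σ σt : Set X) (hσ : MeasurableSet σ) (hσt : MeasurableSet σt)
    (hsub : σ ⊆ σt)
    (n : ℕ) (φ : Fin (n + 1) → X → ℝ)
    (hφ : ∀ k, MemLp (φ k) 2 (μ.restrict σt))
    (ξ ξt : Fin (n + 1) → ℝ) (ψ ψt : X → ℝ)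
    (hψ : ψ = fun x => ∑ k, ξ k * φ k x)
    (hψt : ψt = fun x => ∑ k, ξt k * φ k x)
    (hdual : ∀ j, ∫ x in σ, ψ x * φ j x ∂μ = if j = 0 then 1 else 0)
    (hdualt : ∀ j, ∫ x in σt, ψt x * φ j x ∂μ = if j = 0 then 1 else 0) :
    Real.sqrt (∫ x in σt, (ψt x) ^ 2 ∂μ) ≤ Real.sqrt (∫ x in σ, (ψ x) ^ 2 ∂μ) := by
  have hle : μ.restrict σ ≤ μ.restrict σt := Measure.restrict_mono hsub le_rfl
  -- MemLp of ψ, ψt on σt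
  have hψmem : MemLp ψ 2 (μ.restrict σt) := by
    rw [hψ]
    exact memLp_finset_sum _ (fun k _ => (hφ k).const_mul (ξ k))
  have hψtmem : MemLp ψt 2 (μ.restrict σt) := by
    rw [hψt]
    exact memLp_finset_sum _ (fun k _ => (hφ k).const_mul (ξt k))
  have hψmemσ : MemLp ψ 2 (μ.restrict σ) := hψmem.mono_measure hle
  have hψtmemσ : MemLp ψt 2 (μ.restrict σ) := hψtmem.mono_measure hle
  -- Key identity 1 : ∫_{σt} ψt² = ξt 0
  have key1 : ∫ x in σt, (ψt x) ^ 2 ∂μ = ξt 0 := by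
    have : ∀ x, (ψt x) ^ 2 = ∑ j, ξt j * (ψt x * φ j x) := by
      intro x
      rw [sq]
      nth_rewrite 2 [hψt]
      simp only [Finset.mul_sum]
      exact Finset.sum_congr rfl fun j _ => by ring
    simp_rw [this]
    rw [integral_finset_sum _ (fun j _ =>
      ((memLp_mul_integrable hψtmem (hφ j)).const_mul (ξt j)))]
    simp_rw [integral_const_mul, hdualt]
    simp
  -- Key identity 2 : ∫_σ ψ·ψt = ξt 0
  have key2 : ∫ x in σ, ψ x * ψt x ∂μ = ξt 0 := by
    have : ∀ x, ψ x * ψt x = ∑ j, ξt j * (ψ x * φ j x) := by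
      intro x
      nth_rewrite 1 [hψt]
      simp only [Finset.mul_sum]
      exact Finset.sum_congr rfl fun j _ => by ring
    simp_rw [this]
    rw [integral_finset_sum _ (fun j _ =>
      ((memLp_mul_integrable hψmemσ ((hφ j).mono_measure hle)).const_mul (ξt j)))]
    simp_rw [integral_const_mul, hdual]
    simp
  -- nonnegativity
  have hA0 : 0 ≤ ∫ x in σt, (ψt x) ^ 2 ∂μ := integral_nonneg fun x => sq_nonneg _
  have hB0 : 0 ≤ ∫ x in σ, (ψ x) ^ 2 ∂μ := integral_nonneg fun x => sq_nonneg _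
  set A := ∫ x in σt, (ψt x) ^ 2 ∂μ with hA
  set B := ∫ x in σ, (ψ x) ^ 2 ∂μ with hB
  -- monotonicity of the ψt² integral
  have hmono : ∫ x in σ, (ψt x) ^ 2 ∂μ ≤ A := by
    refine setIntegral_mono_set hψtmem.integrable_sq ?_ (HasSubset.Subset.eventuallyLE hsub)
    exact Filter.Eventually.of_forall fun x => sq_nonneg _
  have hCS := cauchy_schwarz_integral (μ.restrict σ) hψmemσ hψtmemσ
  have hchain : A ≤ Real.sqrt B * Real.sqrt A := by
    calc A = ∫ x in σ, ψ x * ψt x ∂μ := by rw [key1, key2]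
      _ ≤ Real.sqrt B * Real.sqrt (∫ x in σ, (ψt x) ^ 2 ∂μ) := hCS
      _ ≤ Real.sqrt B * Real.sqrt A := by
          exact mul_le_mul_of_nonneg_left (Real.sqrt_le_sqrt hmono) (Real.sqrt_nonneg _)
  rcases eq_or_lt_of_le (Real.sqrt_nonneg A) with h0 | hpos
  · rw [← h0]; exact Real.sqrt_nonneg _
  · have : Real.sqrt A * Real.sqrt A ≤ Real.sqrt B * Real.sqrt A := by
      rwa [Real.mul_self_sqrt hA0]
    exact le_of_mul_le_mul_right this hpos
end

section
/- Let T = {(x, y) ∈ ℝ² : x ≥ 0, y ≥ 0, x + y ≤ 1} be the reference triangle with barycentric coordinate functions λ₁(x, y) = 1 − x − y, λ₂(x, y) = x, λ₃(x, y) = y, and for 0 < ε ≤ 1 let σ_ε = {(x, y) ∈ ℝ² : x ≥ 0, y ≥ 0, x + y ≤ ε} be the ε-scaled corner triangle. Then any function ψ in the span of λ₁, λ₂, λ₃ satisfying ∫_{σ_ε} ψ λ_j dx dy = δ_{1j} for j = 1, 2, 3 has ∫_{σ_ε} ψ² dx dy = 18 ε^{-2}. -/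
open MeasureTheory

private lemma hasDerivAt_cubicPrim (A B C D y : ℝ) :
    HasDerivAt (fun y : ℝ => A * y ^ 1 + B / 2 * y ^ 2 + C / 3 * y ^ 3 + D / 4 * y ^ 4)
      (A + B * y + C * y ^ 2 + D * y ^ 3) y := by
  have h := ((((hasDerivAt_pow 1 y).const_mul A).add
      ((hasDerivAt_pow 2 y).const_mul (B / 2))).add
      ((hasDerivAt_pow 3 y).const_mul (C / 3))).add
      ((hasDerivAt_pow 4 y).const_mul (D / 4))
  refine HasDerivAt.congr_deriv h ?_
  push_cast
  ring

private lemma integral_cubic (A B C D t : ℝ) :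
    ∫ y in (0:ℝ)..t, (A + B * y + C * y ^ 2 + D * y ^ 3)
      = A * t + B / 2 * t ^ 2 + C / 3 * t ^ 3 + D / 4 * t ^ 4 := by
  rw [intervalIntegral.integral_eq_sub_of_hasDerivAt
      (f := fun y : ℝ => A * y ^ 1 + B / 2 * y ^ 2 + C / 3 * y ^ 3 + D / 4 * y ^ 4)
      (fun y _ => hasDerivAt_cubicPrim A B C D y)
      ((Continuous.intervalIntegrable (by fun_prop) 0 t))]
  ring

private lemma tri_integral (ε : ℝ) (hε : 0 < ε) (f : ℝ × ℝ → ℝ) (hf : Continuous f) :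
    ∫ p in {p : ℝ × ℝ | 0 ≤ p.1 ∧ 0 ≤ p.2 ∧ p.1 + p.2 ≤ ε}, f p
      = ∫ x in (0:ℝ)..ε, ∫ y in (0:ℝ)..(ε - x), f (x, y) := by
  set S : Set (ℝ × ℝ) := {p | 0 ≤ p.1 ∧ 0 ≤ p.2 ∧ p.1 + p.2 ≤ ε} with hS
  have hclosed : IsClosed S := by
    have h1 : IsClosed {p : ℝ × ℝ | 0 ≤ p.1} := isClosed_le continuous_const continuous_fst
    have h2 : IsClosed {p : ℝ × ℝ | 0 ≤ p.2} := isClosed_le continuous_const continuous_snd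
    have h3 : IsClosed {p : ℝ × ℝ | p.1 + p.2 ≤ ε} :=
      isClosed_le (continuous_fst.add continuous_snd) continuous_const
    exact h1.inter (h2.inter h3)
  have hmeas : MeasurableSet S := hclosed.measurableSet
  have hcomp : IsCompact S := by
    refine IsCompact.of_isClosed_subset
      (isCompact_Icc.prod isCompact_Icc : IsCompact (Set.Icc (0:ℝ) ε ×ˢ Set.Icc (0:ℝ) ε))
      hclosed ?_
    rintro ⟨x, y⟩ ⟨hx, hy, hxy⟩
    exact ⟨⟨hx, by simp at hx hy hxy ⊢; linarith⟩, ⟨hy, by simp at hx hy hxy ⊢; linarith⟩⟩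
  have hint : IntegrableOn f S := hf.continuousOn.integrableOn_compact hcomp
  rw [← integral_indicator hmeas]
  have hvol : (volume : Measure (ℝ × ℝ)) = (volume : Measure ℝ).prod volume :=
    rfl
  have hgint : Integrable (S.indicator f) ((volume : Measure ℝ).prod volume) := by
    rw [← hvol]
    exact (integrable_indicator_iff hmeas).mpr hint
  rw [hvol, MeasureTheory.integral_prod _ hgint]
  have hin : ∀ x : ℝ, (∫ y, S.indicator f (x, y))
      = (Set.Icc (0:ℝ) ε).indicator (fun x => ∫ y in (0:ℝ)..(ε - x), f (x, y)) x := by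
    intro x
    by_cases hx : x ∈ Set.Icc (0:ℝ) ε
    · rw [Set.indicator_of_mem hx]
      have heq : (fun y => S.indicator f (x, y))
          = (Set.Icc (0:ℝ) (ε - x)).indicator (fun y => f (x, y)) := by
        funext y
        by_cases hy : y ∈ Set.Icc (0:ℝ) (ε - x)
        · rw [Set.indicator_of_mem hy, Set.indicator_of_mem]
          exact ⟨hx.1, hy.1, by have := hy.2; simp only; linarith⟩
        · rw [Set.indicator_of_notMem hy, Set.indicator_of_notMem]
          intro hmem
          refine hy ⟨hmem.2.1, ?_⟩
          have := hmem.2.2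
          simp only at this
          linarith
      rw [heq, integral_indicator measurableSet_Icc, integral_Icc_eq_integral_Ioc,
        ← intervalIntegral.integral_of_le (by linarith [hx.2] : (0:ℝ) ≤ ε - x)]
    · rw [Set.indicator_of_notMem hx]
      have heq : (fun y => S.indicator f (x, y)) = fun _ => (0:ℝ) := by
        funext y
        rw [Set.indicator_of_notMem]
        intro hmem
        simp only [Set.mem_Icc, not_and, not_le] at hx
        obtain ⟨h1, h2, h3⟩ := hmem
        simp only at h1 h2 h3
        rcases lt_or_ge x 0 with h | h
        · exact absurd h1 (not_le.mpr h)
        · linarith [hx h]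
      rw [heq]
      simp
  simp only [hin]
  rw [integral_indicator measurableSet_Icc, integral_Icc_eq_integral_Ioc,
    ← intervalIntegral.integral_of_le hε.le]

private lemma tri_quad (ε : ℝ) (hε : 0 < ε) (c00 c10 c01 c20 c11 c02 : ℝ) :
    ∫ p in {p : ℝ × ℝ | 0 ≤ p.1 ∧ 0 ≤ p.2 ∧ p.1 + p.2 ≤ ε},
        (c00 + c10 * p.1 + c01 * p.2 + c20 * p.1 ^ 2 + c11 * (p.1 * p.2) + c02 * p.2 ^ 2)
      = c00 * ε ^ 2 / 2 + (c10 + c01) * ε ^ 3 / 6 + (c20 + c02) * ε ^ 4 / 12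
        + c11 * ε ^ 4 / 24 := by
  rw [tri_integral ε hε
      (fun p => c00 + c10 * p.1 + c01 * p.2 + c20 * p.1 ^ 2 + c11 * (p.1 * p.2) + c02 * p.2 ^ 2)
      (by fun_prop)]
  have hin : ∀ x : ℝ,
      (∫ y in (0:ℝ)..(ε - x),
        (c00 + c10 * x + c01 * y + c20 * x ^ 2 + c11 * (x * y) + c02 * y ^ 2))
      = (c00 * ε + c01 * ε ^ 2 / 2 + c02 * ε ^ 3 / 3)
        + (c10 * ε - c00 - c01 * ε + c11 * ε ^ 2 / 2 - c02 * ε ^ 2) * x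
        + (c20 * ε - c10 + c01 / 2 - c11 * ε + c02 * ε) * x ^ 2
        + (c11 / 2 - c20 - c02 / 3) * x ^ 3 := by
    intro x
    rw [show (fun y => c00 + c10 * x + c01 * y + c20 * x ^ 2 + c11 * (x * y) + c02 * y ^ 2)
        = fun y => (c00 + c10 * x + c20 * x ^ 2) + (c01 + c11 * x) * y + c02 * y ^ 2 + 0 * y ^ 3
        from funext fun y => by ring]
    rw [integral_cubic]
    ring
  simp only [hin]
  rw [integral_cubic]
  ring

/-- For the ε-scaled corner triangle `σ_ε` inside the reference triangle,
any dual function `ψ` to `λ₁` (with respect to the barycentric coordinates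
`λ₁, λ₂, λ₃` of the reference triangle) on `σ_ε` satisfies
`∫_{σ_ε} ψ² = 18 ε⁻²`. -/
theorem scaled_corner_triangle_dual_basis
    (ε : ℝ) (hε0 : 0 < ε) (hε1 : ε ≤ 1)
    (lam : Fin 3 → ℝ × ℝ → ℝ)
    (hlam : lam = ![fun p => 1 - p.1 - p.2, fun p => p.1, fun p => p.2])
    (σε : Set (ℝ × ℝ))
    (hσε : σε = {p : ℝ × ℝ | 0 ≤ p.1 ∧ 0 ≤ p.2 ∧ p.1 + p.2 ≤ ε})
    (ψ : ℝ × ℝ → ℝ) (hψ : ψ ∈ Submodule.span ℝ (Set.range lam))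
    (hdual : ∀ j, ∫ p in σε, ψ p * lam j p = if j = 0 then 1 else 0) :
    ∫ p in σε, (ψ p) ^ 2 = 18 / ε ^ 2 := by
  subst hσε
  obtain ⟨co, hco⟩ := (Submodule.mem_span_range_iff_exists_fun ℝ).mp hψ
  set a := co 0 with ha'
  set b := co 1 with hb'
  set c := co 2 with hc'
  have hpsi : ∀ p : ℝ × ℝ, ψ p = a + (b - a) * p.1 + (c - a) * p.2 := by
    intro p
    rw [← congrFun hco p]
    simp [Fin.sum_univ_three, hlam]
    ring
  have h0 := hdual 0
  have h1 := hdual 1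
  have h2 := hdual 2
  rw [if_pos rfl] at h0
  rw [if_neg (by decide)] at h1
  rw [if_neg (by decide)] at h2
  rw [show (fun p : ℝ × ℝ => ψ p * lam 0 p)
      = fun p : ℝ × ℝ => a + (b - 2*a) * p.1 + (c - 2*a) * p.2 + (a - b) * p.1 ^ 2
        + (2*a - b - c) * (p.1 * p.2) + (a - c) * p.2 ^ 2
      from funext fun p => by rw [hpsi p, hlam]; simp; ring] at h0
  rw [show (fun p : ℝ × ℝ => ψ p * lam 1 p)
      = fun p : ℝ × ℝ => 0 + a * p.1 + 0 * p.2 + (b - a) * p.1 ^ 2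
        + (c - a) * (p.1 * p.2) + 0 * p.2 ^ 2
      from funext fun p => by rw [hpsi p, hlam]; simp; ring] at h1
  rw [show (fun p : ℝ × ℝ => ψ p * lam 2 p)
      = fun p : ℝ × ℝ => 0 + 0 * p.1 + a * p.2 + 0 * p.1 ^ 2
        + (b - a) * (p.1 * p.2) + (c - a) * p.2 ^ 2
      from funext fun p => by rw [hpsi p, hlam]; simp; ring] at h2
  rw [tri_quad ε hε0] at h0 h1 h2
  rw [show (fun p : ℝ × ℝ => ψ p ^ 2)
      = fun p : ℝ × ℝ => a^2 + (2*a*(b - a)) * p.1 + (2*a*(c - a)) * p.2 + ((b - a)^2) * p.1 ^ 2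
        + (2*(b - a)*(c - a)) * (p.1 * p.2) + ((c - a)^2) * p.2 ^ 2
      from funext fun p => by rw [hpsi p]; ring]
  rw [tri_quad ε hε0]
  have hεne : ε ≠ 0 := ne_of_gt hε0
  have haa : a * ε ^ 6 = 18 * ε ^ 4 := by
    linear_combination (18 * ε ^ 4) * h0 + (18 * ε ^ 4 - 24 * ε ^ 3) * h1
      + (18 * ε ^ 4 - 24 * ε ^ 3) * h2
  have ha : a = 18 / ε ^ 2 := by
    have h4 : (ε : ℝ) ^ 4 ≠ 0 := pow_ne_zero 4 hεne
    have := mul_right_cancel₀ h4 (by linear_combination haa : (a * ε ^ 2) * ε ^ 4 = 18 * ε ^ 4)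
    field_simp
    linear_combination this
  linear_combination a * h0 + b * h1 + c * h2 + ha
end

section
/- Let T = {(x, y) ∈ ℝ² : x ≥ 0, y ≥ 0, x + y ≤ 1} be the reference triangle with barycentric coordinate functions λ₁(x, y) = 1 − x − y, λ₂(x, y) = x, λ₃(x, y) = y, let 0 < ε ≤ 1, and let σ be a measurable set with {(x, y) : x ≥ 0, y ≥ 0, x + y ≤ ε} ⊆ σ ⊆ T. Then any function ψ in the span of λ₁, λ₂, λ₃ satisfying ∫_σ ψ λ_j dx dy = δ_{1j} for j = 1, 2, 3 has ∫_σ ψ² dx dy ≤ 18 ε^{-2}. -/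
open MeasureTheory


lemma triangle_fubini (ε : ℝ) (hε : 0 ≤ ε) (f : ℝ × ℝ → ℝ) (hf : Continuous f) :
    ∫ p in {p : ℝ × ℝ | 0 ≤ p.1 ∧ 0 ≤ p.2 ∧ p.1 + p.2 ≤ ε}, f p
      = ∫ x in (0:ℝ)..ε, ∫ y in (0:ℝ)..(ε - x), f (x, y) := by
  set S := {p : ℝ × ℝ | 0 ≤ p.1 ∧ 0 ≤ p.2 ∧ p.1 + p.2 ≤ ε} with hSdef
  have hSmeas : MeasurableSet S := by
    apply MeasurableSet.inter
    · exact measurableSet_le measurable_const measurable_fst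
    · exact MeasurableSet.inter
        (measurableSet_le measurable_const measurable_snd)
        (measurableSet_le (measurable_fst.add measurable_snd) measurable_const)
  have hSclosed : IsClosed S := by
    apply IsClosed.inter
    · exact isClosed_le continuous_const continuous_fst
    · exact IsClosed.inter (isClosed_le continuous_const continuous_snd)
        (isClosed_le (continuous_fst.add continuous_snd) continuous_const)
  have hSsub : S ⊆ Set.Icc ((0:ℝ), (0:ℝ)) (ε, ε) := by
    rintro ⟨x, y⟩ ⟨h1, h2, h3⟩
    constructor <;> constructor <;> simp_all <;> linarith
  have hScomp : IsCompact S := isCompact_Icc.of_isClosed_subset hSclosed hSsub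
  have hInt : IntegrableOn f S := hf.continuousOn.integrableOn_compact hScomp
  rw [← integral_indicator hSmeas]
  rw [Measure.volume_eq_prod, integral_prod _
    (by rw [← Measure.volume_eq_prod, integrable_indicator_iff hSmeas]; exact hInt)]
  have key : ∀ x : ℝ, (∫ y, S.indicator f (x, y))
      = Set.indicator (Set.Icc 0 ε) (fun x => ∫ y in (0:ℝ)..(ε - x), f (x, y)) x := by
    intro x
    by_cases hx : x ∈ Set.Icc (0:ℝ) ε
    · rw [Set.indicator_of_mem hx]
      have h2 : ∀ y, S.indicator f (x, y)
          = Set.indicator (Set.Icc 0 (ε - x)) (fun y => f (x, y)) y := by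
        intro y
        by_cases hy : y ∈ Set.Icc (0:ℝ) (ε - x)
        · rw [Set.indicator_of_mem hy,
            Set.indicator_of_mem (by exact ⟨hx.1, hy.1, by linarith [hy.2]⟩)]
        · rw [Set.indicator_of_notMem hy, Set.indicator_of_notMem (by
            intro hmem
            exact hy ⟨hmem.2.1, by linarith [hmem.2.2]⟩)]
      simp_rw [h2]
      rw [integral_indicator measurableSet_Icc, integral_Icc_eq_integral_Ioc,
        ← intervalIntegral.integral_of_le (by linarith [hx.2] : (0:ℝ) ≤ ε - x)]
    · rw [Set.indicator_of_notMem hx]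
      have h2 : ∀ y, S.indicator f (x, y) = 0 := by
        intro y
        apply Set.indicator_of_notMem
        intro hmem
        obtain ⟨h1, h2, h3⟩ := hmem
        simp only [Set.mem_Icc, not_and_or, not_le] at hx
        rcases hx with h | h <;> linarith
      simp [h2]
  simp_rw [key]
  rw [integral_indicator measurableSet_Icc, integral_Icc_eq_integral_Ioc,
    ← intervalIntegral.integral_of_le hε]

lemma cubic_integral (c0 c1 c2 c3 c : ℝ) :
    ∫ x in (0:ℝ)..c, (c0 + c1*x + c2*x^2 + c3*x^3)
      = c0*c + c1*c^2/2 + c2*c^3/3 + c3*c^4/4 := by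
  have h : ∀ x ∈ Set.uIcc (0:ℝ) c, HasDerivAt
      (fun x => c0*x + c1/2*x^2 + c2/3*x^3 + c3/4*x^4)
      (c0 + c1*x + c2*x^2 + c3*x^3) x := by
    intro x _
    have H := ((((hasDerivAt_id x).const_mul c0).add
      ((hasDerivAt_pow 2 x).const_mul (c1/2))).add
      ((hasDerivAt_pow 3 x).const_mul (c2/3))).add
      ((hasDerivAt_pow 4 x).const_mul (c3/4))
    refine H.congr_deriv ?_
    ring
  rw [intervalIntegral.integral_eq_sub_of_hasDerivAt h
    (by apply Continuous.intervalIntegrable; continuity)]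
  ring

lemma Jgen (ε a b q0 q1 q2 : ℝ) (hε : 0 ≤ ε)
:
    ∫ p in {p : ℝ × ℝ | 0 ≤ p.1 ∧ 0 ≤ p.2 ∧ p.1 + p.2 ≤ ε},
        (a + b*(p.1+p.2)) * (q0 + q1*p.1 + q2*p.2)
      = a*q0*ε^2/2 + (a*q1+a*q2+2*b*q0)*ε^3/6 + b*(q1+q2)*ε^4/8 := by
  have htf := triangle_fubini ε hε
    (fun p => (a + b*(p.1+p.2)) * (q0 + q1*p.1 + q2*p.2)) (by continuity)
  simp only [] at htf
  rw [htf]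
  have inner : ∀ x : ℝ, (∫ y in (0:ℝ)..(ε-x), (a + b*(x+y)) * (q0 + q1*x + q2*y))
      = (a*q0*ε + (b*q0+a*q2)*ε^2/2 + b*q2*ε^3/3)
        + (a*q1*ε - a*q2*ε + (b*q1 - b*q2)*ε^2/2 - a*q0)*x
        + (a*q2/2 - a*q1 - b*q0/2)*x^2
        + (b*q2/6 - b*q1/2)*x^3 := by
    intro x
    rw [show (fun y => (a + b*(x+y)) * (q0 + q1*x + q2*y))
        = fun y => ((a+b*x)*(q0+q1*x)) + ((a+b*x)*q2 + b*(q0+q1*x))*y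
          + (b*q2)*y^2 + 0*y^3 from funext fun y => by ring]
    rw [cubic_integral]
    ring
  simp_rw [inner]
  rw [cubic_integral]
  ring

lemma tri_compact (ε : ℝ) :
    IsCompact {p : ℝ × ℝ | 0 ≤ p.1 ∧ 0 ≤ p.2 ∧ p.1 + p.2 ≤ ε} := by
  have hclosed : IsClosed {p : ℝ × ℝ | 0 ≤ p.1 ∧ 0 ≤ p.2 ∧ p.1 + p.2 ≤ ε} := by
    apply IsClosed.inter
    · exact isClosed_le continuous_const continuous_fst
    · exact IsClosed.inter (isClosed_le continuous_const continuous_snd)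
        (isClosed_le (continuous_fst.add continuous_snd) continuous_const)
  have hsub : {p : ℝ × ℝ | 0 ≤ p.1 ∧ 0 ≤ p.2 ∧ p.1 + p.2 ≤ ε}
      ⊆ Set.Icc ((0:ℝ), (0:ℝ)) (ε, ε) := by
    rintro ⟨x, y⟩ ⟨h1, h2, h3⟩
    constructor <;> constructor <;> simp_all <;> linarith
  exact isCompact_Icc.of_isClosed_subset hclosed hsub

/-- If `σ` is a measurable set with the ε-scaled corner triangle contained in
`σ` and `σ` contained in the reference triangle `T`, then any dual function
`ψ` to `λ₁` on `σ` satisfies `∫_σ ψ² ≤ 18 ε⁻²`. -/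
theorem intermediate_domain_dual_basis_bound
    (ε : ℝ) (hε0 : 0 < ε) (hε1 : ε ≤ 1)
    (T : Set (ℝ × ℝ))
    (hT : T = {p : ℝ × ℝ | 0 ≤ p.1 ∧ 0 ≤ p.2 ∧ p.1 + p.2 ≤ 1})
    (lam : Fin 3 → ℝ × ℝ → ℝ)
    (hlam : lam = ![fun p => 1 - p.1 - p.2, fun p => p.1, fun p => p.2])
    (σ : Set (ℝ × ℝ)) (hσmeas : MeasurableSet σ)
    (hlower : {p : ℝ × ℝ | 0 ≤ p.1 ∧ 0 ≤ p.2 ∧ p.1 + p.2 ≤ ε} ⊆ σ)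
    (hupper : σ ⊆ T)
    (ψ : ℝ × ℝ → ℝ) (hψ : ψ ∈ Submodule.span ℝ (Set.range lam))
    (hdual : ∀ j, ∫ p in σ, ψ p * lam j p = if j = 0 then 1 else 0) :
    ∫ p in σ, (ψ p) ^ 2 ≤ 18 / ε ^ 2 := by
  obtain ⟨c, hc⟩ := (Submodule.mem_span_range_iff_exists_fun ℝ).1 hψ
  rw [hlam] at hc
  have hψF : ψ = fun p : ℝ × ℝ => c 0 * (1 - p.1 - p.2) + c 1 * p.1 + c 2 * p.2 := by
    rw [← hc]
    funext p
    simp [Fin.sum_univ_three]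
  subst hψF
  have h0 := hdual 0
  have h1 := hdual 1
  have h2 := hdual 2
  rw [hlam] at h0 h1 h2
  simp only [] at h0 h1 h2
  norm_num at h0 h1 h2
  rw [if_neg (by decide : ¬(2:Fin 3) = 0)] at h2
  beta_reduce
  -- abbreviations
  have hε : (0:ℝ) ≤ ε := hε0.le
  have hεne : ε ≠ 0 := ne_of_gt hε0
  have hupper' : σ ⊆ {p : ℝ × ℝ | 0 ≤ p.1 ∧ 0 ≤ p.2 ∧ p.1 + p.2 ≤ 1} := hT ▸ hupper
  have hIσ : ∀ {g : ℝ × ℝ → ℝ}, Continuous g → IntegrableOn g σ := fun hg =>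
    (hg.continuousOn.integrableOn_compact (tri_compact 1)).mono_set hupper'
  have hIS : ∀ {g : ℝ × ℝ → ℝ}, Continuous g →
      IntegrableOn g {p : ℝ × ℝ | 0 ≤ p.1 ∧ 0 ≤ p.2 ∧ p.1 + p.2 ≤ ε} := fun hg =>
    hg.continuousOn.integrableOn_compact (tri_compact ε)
  -- Step B : ∫_σ ψ² = c 0
  have hB : ∫ p in σ, (c 0 * (1 - p.1 - p.2) + c 1 * p.1 + c 2 * p.2) ^ 2 = c 0 := by
    have key : ∀ p : ℝ × ℝ, (c 0 * (1 - p.1 - p.2) + c 1 * p.1 + c 2 * p.2) ^ 2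
        = c 0 * ((c 0 * (1 - p.1 - p.2) + c 1 * p.1 + c 2 * p.2) * (1 - p.1 - p.2))
        + c 1 * ((c 0 * (1 - p.1 - p.2) + c 1 * p.1 + c 2 * p.2) * p.1)
        + c 2 * ((c 0 * (1 - p.1 - p.2) + c 1 * p.1 + c 2 * p.2) * p.2) := fun p => by ring
    rw [integral_congr_ae (Filter.Eventually.of_forall key)]
    have I0 : IntegrableOn (fun p : ℝ × ℝ =>
      (c 0 * (1 - p.1 - p.2) + c 1 * p.1 + c 2 * p.2) * (1 - p.1 - p.2)) σ := hIσ (by fun_prop)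
    have I1 : IntegrableOn (fun p : ℝ × ℝ =>
      (c 0 * (1 - p.1 - p.2) + c 1 * p.1 + c 2 * p.2) * p.1) σ := hIσ (by fun_prop)
    have I2 : IntegrableOn (fun p : ℝ × ℝ =>
      (c 0 * (1 - p.1 - p.2) + c 1 * p.1 + c 2 * p.2) * p.2) σ := hIσ (by fun_prop)
    have e1 : ∫ p in σ,
        (c 0 * ((c 0 * (1 - p.1 - p.2) + c 1 * p.1 + c 2 * p.2) * (1 - p.1 - p.2))
        + c 1 * ((c 0 * (1 - p.1 - p.2) + c 1 * p.1 + c 2 * p.2) * p.1)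
        + c 2 * ((c 0 * (1 - p.1 - p.2) + c 1 * p.1 + c 2 * p.2) * p.2))
        = (∫ p in σ, (c 0 * ((c 0 * (1 - p.1 - p.2) + c 1 * p.1 + c 2 * p.2) * (1 - p.1 - p.2))
            + c 1 * ((c 0 * (1 - p.1 - p.2) + c 1 * p.1 + c 2 * p.2) * p.1)))
          + ∫ p in σ, c 2 * ((c 0 * (1 - p.1 - p.2) + c 1 * p.1 + c 2 * p.2) * p.2) :=
      integral_add ((I0.const_mul (c 0)).add (I1.const_mul (c 1))) (I2.const_mul (c 2))
    have e2 : ∫ p in σ,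
        (c 0 * ((c 0 * (1 - p.1 - p.2) + c 1 * p.1 + c 2 * p.2) * (1 - p.1 - p.2))
        + c 1 * ((c 0 * (1 - p.1 - p.2) + c 1 * p.1 + c 2 * p.2) * p.1))
        = (∫ p in σ, c 0 * ((c 0 * (1 - p.1 - p.2) + c 1 * p.1 + c 2 * p.2) * (1 - p.1 - p.2)))
          + ∫ p in σ, c 1 * ((c 0 * (1 - p.1 - p.2) + c 1 * p.1 + c 2 * p.2) * p.1) :=
      integral_add (I0.const_mul (c 0)) (I1.const_mul (c 1))
    have h2' : ∫ p in σ, (c 0 * (1 - p.1 - p.2) + c 1 * p.1 + c 2 * p.2) * p.2 = 0 := h2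
    rw [e1, e2, integral_const_mul, integral_const_mul, integral_const_mul, h0, h1, h2']
    ring
  -- J values of the explicit dual φ on the small triangle S
  have hJ0 : ∫ p in {p : ℝ × ℝ | 0 ≤ p.1 ∧ 0 ≤ p.2 ∧ p.1 + p.2 ≤ ε},
      (18/ε^2 + -(24/ε^3)*(p.1+p.2)) * (1 + (-1)*p.1 + (-1)*p.2) = 1 := by
    rw [Jgen ε (18/ε^2) (-(24/ε^3)) 1 (-1) (-1) hε]
    field_simp
    ring
  have hJ1 : ∫ p in {p : ℝ × ℝ | 0 ≤ p.1 ∧ 0 ≤ p.2 ∧ p.1 + p.2 ≤ ε},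
      (18/ε^2 + -(24/ε^3)*(p.1+p.2)) * (0 + 1*p.1 + 0*p.2) = 0 := by
    rw [Jgen ε (18/ε^2) (-(24/ε^3)) 0 1 0 hε]
    field_simp
    ring
  have hJ2 : ∫ p in {p : ℝ × ℝ | 0 ≤ p.1 ∧ 0 ≤ p.2 ∧ p.1 + p.2 ≤ ε},
      (18/ε^2 + -(24/ε^3)*(p.1+p.2)) * (0 + 0*p.1 + 1*p.2) = 0 := by
    rw [Jgen ε (18/ε^2) (-(24/ε^3)) 0 0 1 hε]
    field_simp
    ring
  have hJ4 : ∫ p in {p : ℝ × ℝ | 0 ≤ p.1 ∧ 0 ≤ p.2 ∧ p.1 + p.2 ≤ ε},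
      (18/ε^2 + -(24/ε^3)*(p.1+p.2)) * (18/ε^2 + (-(24/ε^3))*p.1 + (-(24/ε^3))*p.2)
        = 18/ε^2 := by
    rw [Jgen ε (18/ε^2) (-(24/ε^3)) (18/ε^2) (-(24/ε^3)) (-(24/ε^3)) hε]
    field_simp
    ring
  -- Step C : ∫_S ψ φ = c 0
  have hC : ∫ p in {p : ℝ × ℝ | 0 ≤ p.1 ∧ 0 ≤ p.2 ∧ p.1 + p.2 ≤ ε},
      (c 0 * (1 - p.1 - p.2) + c 1 * p.1 + c 2 * p.2) * (18/ε^2 + -(24/ε^3)*(p.1+p.2))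
        = c 0 := by
    have key : ∀ p : ℝ × ℝ,
        (c 0 * (1 - p.1 - p.2) + c 1 * p.1 + c 2 * p.2) * (18/ε^2 + -(24/ε^3)*(p.1+p.2))
        = c 0 * ((18/ε^2 + -(24/ε^3)*(p.1+p.2)) * (1 + (-1)*p.1 + (-1)*p.2))
        + c 1 * ((18/ε^2 + -(24/ε^3)*(p.1+p.2)) * (0 + 1*p.1 + 0*p.2))
        + c 2 * ((18/ε^2 + -(24/ε^3)*(p.1+p.2)) * (0 + 0*p.1 + 1*p.2)) := fun p => by ring
    rw [integral_congr_ae (Filter.Eventually.of_forall key)]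
    have I0 : IntegrableOn (fun p : ℝ × ℝ =>
        (18/ε^2 + -(24/ε^3)*(p.1+p.2)) * (1 + (-1)*p.1 + (-1)*p.2))
        {p : ℝ × ℝ | 0 ≤ p.1 ∧ 0 ≤ p.2 ∧ p.1 + p.2 ≤ ε} := hIS (by fun_prop)
    have I1 : IntegrableOn (fun p : ℝ × ℝ =>
        (18/ε^2 + -(24/ε^3)*(p.1+p.2)) * (0 + 1*p.1 + 0*p.2))
        {p : ℝ × ℝ | 0 ≤ p.1 ∧ 0 ≤ p.2 ∧ p.1 + p.2 ≤ ε} := hIS (by fun_prop)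
    have I2 : IntegrableOn (fun p : ℝ × ℝ =>
        (18/ε^2 + -(24/ε^3)*(p.1+p.2)) * (0 + 0*p.1 + 1*p.2))
        {p : ℝ × ℝ | 0 ≤ p.1 ∧ 0 ≤ p.2 ∧ p.1 + p.2 ≤ ε} := hIS (by fun_prop)
    have e1 : ∫ p in {p : ℝ × ℝ | 0 ≤ p.1 ∧ 0 ≤ p.2 ∧ p.1 + p.2 ≤ ε},
        (c 0 * ((18/ε^2 + -(24/ε^3)*(p.1+p.2)) * (1 + (-1)*p.1 + (-1)*p.2))
        + c 1 * ((18/ε^2 + -(24/ε^3)*(p.1+p.2)) * (0 + 1*p.1 + 0*p.2))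
        + c 2 * ((18/ε^2 + -(24/ε^3)*(p.1+p.2)) * (0 + 0*p.1 + 1*p.2)))
        = (∫ p in {p : ℝ × ℝ | 0 ≤ p.1 ∧ 0 ≤ p.2 ∧ p.1 + p.2 ≤ ε},
            (c 0 * ((18/ε^2 + -(24/ε^3)*(p.1+p.2)) * (1 + (-1)*p.1 + (-1)*p.2))
            + c 1 * ((18/ε^2 + -(24/ε^3)*(p.1+p.2)) * (0 + 1*p.1 + 0*p.2))))
          + ∫ p in {p : ℝ × ℝ | 0 ≤ p.1 ∧ 0 ≤ p.2 ∧ p.1 + p.2 ≤ ε},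
              c 2 * ((18/ε^2 + -(24/ε^3)*(p.1+p.2)) * (0 + 0*p.1 + 1*p.2)) :=
      integral_add ((I0.const_mul (c 0)).add (I1.const_mul (c 1))) (I2.const_mul (c 2))
    have e2 : ∫ p in {p : ℝ × ℝ | 0 ≤ p.1 ∧ 0 ≤ p.2 ∧ p.1 + p.2 ≤ ε},
        (c 0 * ((18/ε^2 + -(24/ε^3)*(p.1+p.2)) * (1 + (-1)*p.1 + (-1)*p.2))
        + c 1 * ((18/ε^2 + -(24/ε^3)*(p.1+p.2)) * (0 + 1*p.1 + 0*p.2)))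
        = (∫ p in {p : ℝ × ℝ | 0 ≤ p.1 ∧ 0 ≤ p.2 ∧ p.1 + p.2 ≤ ε},
            c 0 * ((18/ε^2 + -(24/ε^3)*(p.1+p.2)) * (1 + (-1)*p.1 + (-1)*p.2)))
          + ∫ p in {p : ℝ × ℝ | 0 ≤ p.1 ∧ 0 ≤ p.2 ∧ p.1 + p.2 ≤ ε},
              c 1 * ((18/ε^2 + -(24/ε^3)*(p.1+p.2)) * (0 + 1*p.1 + 0*p.2)) :=
      integral_add (I0.const_mul (c 0)) (I1.const_mul (c 1))
    rw [e1, e2, integral_const_mul, integral_const_mul, integral_const_mul, hJ0, hJ1, hJ2]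
    ring
  -- Step E : expansion of ∫_S (ψ - φ)²
  have hE : ∫ p in {p : ℝ × ℝ | 0 ≤ p.1 ∧ 0 ≤ p.2 ∧ p.1 + p.2 ≤ ε},
      ((c 0 * (1 - p.1 - p.2) + c 1 * p.1 + c 2 * p.2) - (18/ε^2 + -(24/ε^3)*(p.1+p.2))) ^ 2
      = (∫ p in {p : ℝ × ℝ | 0 ≤ p.1 ∧ 0 ≤ p.2 ∧ p.1 + p.2 ≤ ε},
          (c 0 * (1 - p.1 - p.2) + c 1 * p.1 + c 2 * p.2) ^ 2)
        - 2 * c 0 + 18/ε^2 := by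
    have key : ∀ p : ℝ × ℝ,
        ((c 0 * (1 - p.1 - p.2) + c 1 * p.1 + c 2 * p.2) - (18/ε^2 + -(24/ε^3)*(p.1+p.2))) ^ 2
        = (c 0 * (1 - p.1 - p.2) + c 1 * p.1 + c 2 * p.2) ^ 2
          - 2 * ((c 0 * (1 - p.1 - p.2) + c 1 * p.1 + c 2 * p.2)
              * (18/ε^2 + -(24/ε^3)*(p.1+p.2)))
          + (18/ε^2 + -(24/ε^3)*(p.1+p.2)) * (18/ε^2 + (-(24/ε^3))*p.1 + (-(24/ε^3))*p.2) :=
      fun p => by ring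
    rw [integral_congr_ae (Filter.Eventually.of_forall key)]
    have IA : IntegrableOn (fun p : ℝ × ℝ =>
        (c 0 * (1 - p.1 - p.2) + c 1 * p.1 + c 2 * p.2) ^ 2)
        {p : ℝ × ℝ | 0 ≤ p.1 ∧ 0 ≤ p.2 ∧ p.1 + p.2 ≤ ε} := hIS (by fun_prop)
    have IB : IntegrableOn (fun p : ℝ × ℝ =>
        (c 0 * (1 - p.1 - p.2) + c 1 * p.1 + c 2 * p.2) * (18/ε^2 + -(24/ε^3)*(p.1+p.2)))
        {p : ℝ × ℝ | 0 ≤ p.1 ∧ 0 ≤ p.2 ∧ p.1 + p.2 ≤ ε} := hIS (by fun_prop)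
    have IC : IntegrableOn (fun p : ℝ × ℝ =>
        (18/ε^2 + -(24/ε^3)*(p.1+p.2)) * (18/ε^2 + (-(24/ε^3))*p.1 + (-(24/ε^3))*p.2))
        {p : ℝ × ℝ | 0 ≤ p.1 ∧ 0 ≤ p.2 ∧ p.1 + p.2 ≤ ε} := hIS (by fun_prop)
    have e1 : ∫ p in {p : ℝ × ℝ | 0 ≤ p.1 ∧ 0 ≤ p.2 ∧ p.1 + p.2 ≤ ε},
        ((c 0 * (1 - p.1 - p.2) + c 1 * p.1 + c 2 * p.2) ^ 2
          - 2 * ((c 0 * (1 - p.1 - p.2) + c 1 * p.1 + c 2 * p.2)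
              * (18/ε^2 + -(24/ε^3)*(p.1+p.2)))
          + (18/ε^2 + -(24/ε^3)*(p.1+p.2)) * (18/ε^2 + (-(24/ε^3))*p.1 + (-(24/ε^3))*p.2))
        = (∫ p in {p : ℝ × ℝ | 0 ≤ p.1 ∧ 0 ≤ p.2 ∧ p.1 + p.2 ≤ ε},
            ((c 0 * (1 - p.1 - p.2) + c 1 * p.1 + c 2 * p.2) ^ 2
            - 2 * ((c 0 * (1 - p.1 - p.2) + c 1 * p.1 + c 2 * p.2)
                * (18/ε^2 + -(24/ε^3)*(p.1+p.2)))))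
          + ∫ p in {p : ℝ × ℝ | 0 ≤ p.1 ∧ 0 ≤ p.2 ∧ p.1 + p.2 ≤ ε},
              (18/ε^2 + -(24/ε^3)*(p.1+p.2)) * (18/ε^2 + (-(24/ε^3))*p.1 + (-(24/ε^3))*p.2) :=
      integral_add (IA.sub (IB.const_mul 2)) IC
    have e2 : ∫ p in {p : ℝ × ℝ | 0 ≤ p.1 ∧ 0 ≤ p.2 ∧ p.1 + p.2 ≤ ε},
        ((c 0 * (1 - p.1 - p.2) + c 1 * p.1 + c 2 * p.2) ^ 2
          - 2 * ((c 0 * (1 - p.1 - p.2) + c 1 * p.1 + c 2 * p.2)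
              * (18/ε^2 + -(24/ε^3)*(p.1+p.2))))
        = (∫ p in {p : ℝ × ℝ | 0 ≤ p.1 ∧ 0 ≤ p.2 ∧ p.1 + p.2 ≤ ε},
            (c 0 * (1 - p.1 - p.2) + c 1 * p.1 + c 2 * p.2) ^ 2)
          - ∫ p in {p : ℝ × ℝ | 0 ≤ p.1 ∧ 0 ≤ p.2 ∧ p.1 + p.2 ≤ ε},
              2 * ((c 0 * (1 - p.1 - p.2) + c 1 * p.1 + c 2 * p.2)
                * (18/ε^2 + -(24/ε^3)*(p.1+p.2))) :=
      integral_sub IA (IB.const_mul 2)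
    rw [e1, e2, integral_const_mul, hC, hJ4]
  have hpos : (0:ℝ) ≤ ∫ p in {p : ℝ × ℝ | 0 ≤ p.1 ∧ 0 ≤ p.2 ∧ p.1 + p.2 ≤ ε},
      ((c 0 * (1 - p.1 - p.2) + c 1 * p.1 + c 2 * p.2) - (18/ε^2 + -(24/ε^3)*(p.1+p.2))) ^ 2 :=
    integral_nonneg fun p => sq_nonneg _
  have hmono : (∫ p in {p : ℝ × ℝ | 0 ≤ p.1 ∧ 0 ≤ p.2 ∧ p.1 + p.2 ≤ ε},
        (c 0 * (1 - p.1 - p.2) + c 1 * p.1 + c 2 * p.2) ^ 2)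
      ≤ ∫ p in σ, (c 0 * (1 - p.1 - p.2) + c 1 * p.1 + c 2 * p.2) ^ 2 := by
    apply setIntegral_mono_set (hIσ (by fun_prop))
      (Filter.Eventually.of_forall fun p => sq_nonneg _)
    exact Filter.Eventually.of_forall fun p hp => hlower hp
  rw [hB] at hmono
  rw [hB]
  linarith [hE ▸ hpos]
end
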